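/- arXiv:1312.1305 — 5 statements merged into one kernel-verified Lean document; each statement's English description precedes it below -/
import Mathlib

section
/- Let σ: ℝ → X be an (L,b)-quasi-isometric embedding into a metric space X, set x₀ = σ(0), R₁ ≥ 2b(L²+2), t₁ = L(b+R₁), E = σ((−∞,−t₁]) and F = σ([t₁,∞)). Let γ: [0,ℓ] → X be a 1-Lipschitz curve with γ(0) ∈ E and γ(ℓ) ∈ F, and let M = sup_{s ∈ [0,ℓ]} d(γ(s),x₀) (assumed attained at some s̄). Then ℓ ≥ M/(L²+1). -/
theorem stmt_2 {X : Type*} [MetricSpace X] (σ : ℝ → X) (L b R₁ : ℝ)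
    (hL : 1 ≤ L) (hb : 0 < b) (hR₁ : 2 * b * (L ^ 2 + 2) ≤ R₁)
    (hlow : ∀ t t' : ℝ, L⁻¹ * |t - t'| - b ≤ dist (σ t) (σ t'))
    (hup : ∀ t t' : ℝ, dist (σ t) (σ t') ≤ L * |t - t'| + b)
    (x₀ : X) (hx₀ : x₀ = σ 0) (t₁ : ℝ) (ht₁ : t₁ = L * (b + R₁))
    (ℓ : ℝ) (hℓ : 0 ≤ ℓ) (γ : ℝ → X)
    (hγlip : LipschitzOnWith 1 γ (Set.Icc 0 ℓ))
    (hγ0 : γ 0 ∈ σ '' Set.Iic (-t₁)) (hγℓ : γ ℓ ∈ σ '' Set.Ici t₁)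
    (M : ℝ) (sbar : ℝ) (hsbar : sbar ∈ Set.Icc 0 ℓ) (hM : M = dist (γ sbar) x₀)
    (hMsup : ∀ s ∈ Set.Icc 0 ℓ, dist (γ s) x₀ ≤ M) :
    M / (L ^ 2 + 1) ≤ ℓ := by
  obtain ⟨u, hu, hγ0⟩ := hγ0
  obtain ⟨v, hv, hγℓ⟩ := hγℓ
  simp only [Set.mem_Iic, Set.mem_Ici] at hu hv
  obtain ⟨hs0, hsl⟩ := hsbar
  have hL0 : (0:ℝ) < L := lt_of_lt_of_le one_pos hL
  have hLinv : L * L⁻¹ = 1 := mul_inv_cancel₀ (ne_of_gt hL0)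
  have hbR : 0 < b + R₁ := by nlinarith [sq_nonneg L]
  have ht₁pos : 0 ≤ t₁ := by rw [ht₁]; positivity
  have huv : u ≤ 0 ∧ 0 ≤ v := ⟨le_trans hu (by linarith), le_trans (by linarith) hv⟩
  -- M ≥ R₁
  have h1 : L⁻¹ * |u - 0| - b ≤ dist (σ u) (σ 0) := hlow u 0
  have h2 : dist (σ u) (σ 0) ≤ M := by
    rw [hγ0, ← hx₀]; exact hMsup 0 ⟨le_refl _, hℓ⟩
  have habs_u : |u - 0| = -u := by rw [sub_zero, abs_of_nonpos huv.1]
  rw [habs_u] at h1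
  have hMR : R₁ ≤ M := by
    have : L⁻¹ * t₁ ≤ L⁻¹ * (-u) := by
      apply mul_le_mul_of_nonneg_left (by linarith) (by positivity)
    have ht : L⁻¹ * t₁ = b + R₁ := by
      rw [ht₁]; field_simp
    nlinarith
  -- Lipschitz bounds
  have hlip1 : dist (γ sbar) (γ 0) ≤ sbar := by
    have := hγlip.dist_le_mul sbar ⟨hs0, hsl⟩ 0 ⟨le_refl _, hℓ⟩
    simpa [Real.dist_eq, abs_of_nonneg hs0] using this
  have hlip2 : dist (γ sbar) (γ ℓ) ≤ ℓ - sbar := by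
    have := hγlip.dist_le_mul sbar ⟨hs0, hsl⟩ ℓ ⟨hℓ, le_refl _⟩
    have habs : |sbar - ℓ| = ℓ - sbar := by rw [abs_sub_comm, abs_of_nonneg (by linarith)]
    simpa [Real.dist_eq, habs] using this
  have hlip3 : dist (γ 0) (γ ℓ) ≤ ℓ := by
    have := hγlip.dist_le_mul 0 ⟨le_refl _, hℓ⟩ ℓ ⟨hℓ, le_refl _⟩
    simpa [Real.dist_eq, abs_of_nonneg hℓ] using this
  -- upper bounds on M
  have hA : M ≤ sbar + (L * (-u) + b) := by
    have hd := hup u 0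
    rw [habs_u] at hd
    calc M = dist (γ sbar) x₀ := hM
      _ ≤ dist (γ sbar) (γ 0) + dist (γ 0) x₀ := dist_triangle _ _ _
      _ ≤ sbar + (L * (-u) + b) := by
          rw [hγ0, ← hx₀] at hd; exact add_le_add hlip1 hd
  have hB : M ≤ (ℓ - sbar) + (L * v + b) := by
    have hd := hup 0 v
    have habs : |(0:ℝ) - v| = v := by rw [abs_sub_comm, sub_zero, abs_of_nonneg huv.2]
    rw [habs] at hd
    calc M = dist (γ sbar) x₀ := hM
      _ = dist (γ sbar) (σ 0) := by rw [hx₀]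
      _ ≤ dist (γ sbar) (γ ℓ) + dist (γ ℓ) (σ 0) := dist_triangle _ _ _
      _ = dist (γ sbar) (γ ℓ) + dist (σ 0) (σ v) := by rw [← hγℓ, dist_comm (σ v)]
      _ ≤ (ℓ - sbar) + (L * v + b) := add_le_add hlip2 hd
  -- length bound on v - u
  have hC : v - u ≤ L * (ℓ + b) := by
    have hd := hlow u v
    have habs : |u - v| = v - u := by rw [abs_sub_comm, abs_of_nonneg (by linarith)]
    rw [habs] at hd
    rw [hγ0, hγℓ] at hd
    have : L⁻¹ * (v - u) ≤ ℓ + b := by linarith [hlip3]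
    calc v - u = L * (L⁻¹ * (v - u)) := by field_simp
      _ ≤ L * (ℓ + b) := mul_le_mul_of_nonneg_left this (le_of_lt hL0)
  -- combine
  have hfinal : M ≤ (L ^ 2 + 1) * ℓ := by nlinarith
  rw [div_le_iff₀ (by positivity)]
  linarith [hfinal]
end

section
/- Let σ: ℝ → X be an (L,b)-quasi-isometric embedding into a metric space X, x₀ = σ(0), R₁ ≥ 2b(L²+2), t₁ = L(b+R₁). Set c₀ = 4/b and c₁ = 4(L²+1), and define ρ: X → [0,∞] by ρ(x) = c₀ if d(x,x₀) < R₁ and ρ(x) = c₁/d(x,x₀) otherwise. Then for every 1-Lipschitz curve γ: [0,ℓ] → X with γ(0) ∈ σ((−∞,−t₁]) and γ(ℓ) ∈ σ([t₁,∞)), one has ∫₀^ℓ ρ(γ(s)) ds ≥ 1. -/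
open scoped ENNReal
open MeasureTheory Set

set_option maxHeartbeats 2000000 in
theorem stmt_3 {X : Type*} [MetricSpace X] (σ : ℝ → X) (L b R₁ : ℝ)
    (hL : 1 ≤ L) (hb : 0 < b) (hR₁ : 2 * b * (L ^ 2 + 2) ≤ R₁)
    (hlow : ∀ t t' : ℝ, L⁻¹ * |t - t'| - b ≤ dist (σ t) (σ t'))
    (hup : ∀ t t' : ℝ, dist (σ t) (σ t') ≤ L * |t - t'| + b)
    (x₀ : X) (hx₀ : x₀ = σ 0) (t₁ : ℝ) (ht₁ : t₁ = L * (b + R₁))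
    (c₀ c₁ : ℝ) (hc₀ : c₀ = 4 / b) (hc₁ : c₁ = 4 * (L ^ 2 + 1))
    (ρ : X → ℝ≥0∞)
    (hρ : ∀ x : X, ρ x = if dist x x₀ < R₁ then ENNReal.ofReal c₀
        else ENNReal.ofReal (c₁ / dist x x₀))
    (ℓ : ℝ) (hℓ : 0 ≤ ℓ) (γ : ℝ → X)
    (hγlip : LipschitzOnWith 1 γ (Set.Icc 0 ℓ))
    (hγ0 : γ 0 ∈ σ '' Set.Iic (-t₁)) (hγℓ : γ ℓ ∈ σ '' Set.Ici t₁) :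
    1 ≤ ∫⁻ s in Set.Icc 0 ℓ, ρ (γ s) := by
  obtain ⟨t₀, ht₀, hσt₀⟩ := hγ0
  obtain ⟨s₀, hs₀, hσs₀⟩ := hγℓ
  simp only [Set.mem_Iic] at ht₀
  simp only [Set.mem_Ici] at hs₀
  have hL0 : (0:ℝ) < L := lt_of_lt_of_le one_pos hL
  have hL2 : (1:ℝ) ≤ L ^ 2 := by nlinarith
  have hR₁pos : 0 < R₁ := lt_of_lt_of_le (by nlinarith) hR₁
  have ht₁pos : 0 < t₁ := by rw [ht₁]; positivity
  set d₀ : ℝ := dist (γ 0) x₀ with hd₀def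
  set dℓ : ℝ := dist (γ ℓ) x₀ with hdℓdef
  have hmem0 : (0:ℝ) ∈ Set.Icc 0 ℓ := by constructor <;> simp [hℓ]
  have hmemℓ : ℓ ∈ Set.Icc 0 ℓ := by constructor <;> simp [hℓ]
  have hdist : ∀ u ∈ Set.Icc 0 ℓ, ∀ v ∈ Set.Icc 0 ℓ, dist (γ u) (γ v) ≤ |u - v| := by
    intro u hu v hv
    have := hγlip.dist_le_mul u hu v hv
    simpa [Real.dist_eq] using this
  -- endpoints are far from x₀
  have hd₀R : R₁ ≤ d₀ := by
    have h1 : L⁻¹ * |t₀ - 0| - b ≤ dist (σ t₀) (σ 0) := hlow t₀ 0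
    have h2 : |t₀ - 0| = -t₀ := by
      rw [sub_zero, abs_of_nonpos (by linarith)]
    have h3 : t₁ ≤ -t₀ := by linarith
    have h4 : L⁻¹ * t₁ = b + R₁ := by
      rw [ht₁]; field_simp
    have h5 : L⁻¹ * t₁ ≤ L⁻¹ * (-t₀) := by
      apply mul_le_mul_of_nonneg_left h3 (by positivity)
    have h6 : dist (σ t₀) (σ 0) = d₀ := by rw [hd₀def, ← hσt₀, hx₀]
    rw [h2] at h1
    linarith
  have hdℓR : R₁ ≤ dℓ := by
    have h1 : L⁻¹ * |s₀ - 0| - b ≤ dist (σ s₀) (σ 0) := hlow s₀ 0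
    have h2 : |s₀ - 0| = s₀ := by
      rw [sub_zero, abs_of_nonneg (by linarith)]
    have h4 : L⁻¹ * t₁ = b + R₁ := by
      rw [ht₁]; field_simp
    have h5 : L⁻¹ * t₁ ≤ L⁻¹ * s₀ := by
      apply mul_le_mul_of_nonneg_left (by linarith) (by positivity)
    have h6 : dist (σ s₀) (σ 0) = dℓ := by rw [hdℓdef, ← hσs₀, hx₀]
    rw [h2] at h1
    linarith
  have hd₀pos : 0 < d₀ := lt_of_lt_of_le hR₁pos hd₀R
  have hdℓpos : 0 < dℓ := lt_of_lt_of_le hR₁pos hdℓR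
  by_cases hcase : ∃ s ∈ Set.Icc 0 ℓ, dist (γ s) x₀ ≤ R₁ - b / 2
  · -- Case A: the curve gets within R₁ - b/2 of x₀
    obtain ⟨s, hs, hds⟩ := hcase
    have hslb : b / 2 ≤ s := by
      have h1 : dist (γ 0) (γ s) ≤ |0 - s| := hdist 0 hmem0 s hs
      have h2 : |0 - s| = s := by rw [zero_sub, abs_neg, abs_of_nonneg hs.1]
      have h3 : d₀ - dist (γ s) x₀ ≤ dist (γ 0) (γ s) := by
        have := abs_dist_sub_le (γ 0) (γ s) x₀
        have := abs_le.mp this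
        linarith [this.1, this.2]
      linarith
    set I : Set ℝ := Set.Icc (s - b/4) s with hI
    have hIsub : I ⊆ Set.Icc 0 ℓ := by
      intro u hu
      exact ⟨by linarith [hu.1, hslb], le_trans hu.2 hs.2⟩
    have hIball : ∀ u ∈ I, dist (γ u) x₀ < R₁ := by
      intro u hu
      have h1 : dist (γ u) (γ s) ≤ |u - s| := hdist u (hIsub hu) s hs
      have h2 : |u - s| ≤ b/4 := by
        rw [abs_le]; constructor <;> [linarith [hu.1]; linarith [hu.2]]
      have h3 : dist (γ u) x₀ ≤ dist (γ u) (γ s) + dist (γ s) x₀ := dist_triangle _ _ _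
      linarith
    calc (1:ℝ≥0∞) = ENNReal.ofReal c₀ * volume I := by
          rw [hI, Real.volume_Icc, hc₀, ← ENNReal.ofReal_mul (by positivity)]
          rw [show s - (s - b/4) = b/4 by ring]
          rw [show 4 / b * (b/4) = 1 by field_simp]
          exact ENNReal.ofReal_one.symm
      _ = ∫⁻ _ in I, ENNReal.ofReal c₀ := (setLIntegral_const I _).symm
      _ ≤ ∫⁻ u in I, ρ (γ u) := by
          apply setLIntegral_mono' measurableSet_Icc
          intro u hu
          rw [hρ, if_pos (hIball u hu)]
      _ ≤ ∫⁻ s in Set.Icc 0 ℓ, ρ (γ s) := lintegral_mono_set hIsub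
  · -- Case B: the curve stays outside radius R₁ - b/2
    push_neg at hcase
    set m : ℝ := (dℓ + ℓ - d₀) / 2 with hm
    set D : ℝ := (d₀ + dℓ + ℓ) / 2 with hD
    have habs : |d₀ - dℓ| ≤ ℓ := by
      have h1 : dist (γ 0) (γ ℓ) ≤ |0 - ℓ| := hdist 0 hmem0 ℓ hmemℓ
      have h2 : |0 - ℓ| = ℓ := by rw [zero_sub, abs_neg, abs_of_nonneg hℓ]
      have := abs_dist_sub_le (γ 0) (γ ℓ) x₀
      rw [h2] at h1
      calc |d₀ - dℓ| ≤ dist (γ 0) (γ ℓ) := this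
        _ ≤ ℓ := h1
    obtain ⟨habs1, habs2⟩ := abs_le.mp habs
    have hm0 : 0 ≤ m := by rw [hm]; linarith
    have hmℓ : m ≤ ℓ := by rw [hm]; linarith
    have hDd₀ : d₀ ≤ D := by rw [hD]; linarith
    have hDdℓ : dℓ ≤ D := by rw [hD]; linarith
    have hDpos : 0 < D := lt_of_lt_of_le hd₀pos hDd₀
    -- pointwise bound
    have hc₁nn : (0:ℝ) ≤ c₁ := by rw [hc₁]; positivity
    have hpt : ∀ s ∈ Set.Icc 0 ℓ, ∀ z : ℝ, dist (γ s) x₀ ≤ z →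
        ENNReal.ofReal (c₁ / z) ≤ ρ (γ s) := by
      intro s hs z hz
      have hdlb : R₁ - b / 2 < dist (γ s) x₀ := hcase s hs
      have hdpos : 0 < dist (γ s) x₀ := by nlinarith
      have h1 : c₁ / z ≤ c₁ / dist (γ s) x₀ := by
        apply div_le_div_of_nonneg_left hc₁nn hdpos hz
      rw [hρ]
      split_ifs with h
      · apply ENNReal.ofReal_le_ofReal
        have h2 : c₁ / dist (γ s) x₀ ≤ c₀ := by
          rw [hc₀, hc₁, div_le_div_iff₀ hdpos hb]
          nlinarith
        linarith
      · exact ENNReal.ofReal_le_ofReal h1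
    have hup₁ : ∀ s ∈ Set.Icc 0 ℓ, dist (γ s) x₀ ≤ d₀ + s := by
      intro s hs
      have h1 : dist (γ s) (γ 0) ≤ |s - 0| := hdist s hs 0 hmem0
      have h2 : |s - 0| = s := by rw [sub_zero, abs_of_nonneg hs.1]
      have h3 := dist_triangle (γ s) (γ 0) x₀
      linarith
    have hup₂ : ∀ s ∈ Set.Icc 0 ℓ, dist (γ s) x₀ ≤ dℓ + (ℓ - s) := by
      intro s hs
      have h1 : dist (γ s) (γ ℓ) ≤ |s - ℓ| := hdist s hs ℓ hmemℓ
      have h2 : |s - ℓ| = ℓ - s := by rw [abs_of_nonpos (by linarith [hs.2]), neg_sub]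
      have h3 := dist_triangle (γ s) (γ ℓ) x₀
      linarith
    -- interval integral computations
    have hint1 : ∫ s in (0:ℝ)..m, c₁ / (d₀ + s) = c₁ * Real.log (D / d₀) := by
      have e1 : ∀ s : ℝ, c₁ / (d₀ + s) = c₁ * (fun u : ℝ => u⁻¹) (d₀ + s) := by
        intro s; simp [div_eq_mul_inv]
      simp only [e1]
      rw [intervalIntegral.integral_comp_add_left (fun u : ℝ => c₁ * u⁻¹) d₀]
      rw [intervalIntegral.integral_const_mul]
      rw [integral_inv (Set.notMem_uIcc_of_lt (by linarith) (by linarith))]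
      rw [show d₀ + m = D by rw [hD, hm]; ring, add_zero]
    have hint2 : ∫ s in m..ℓ, c₁ / (dℓ + (ℓ - s)) = c₁ * Real.log (D / dℓ) := by
      have e1 : ∀ s : ℝ, c₁ / (dℓ + (ℓ - s)) = (fun u : ℝ => c₁ * u⁻¹) ((dℓ + ℓ) - s) := by
        intro s; rw [show dℓ + (ℓ - s) = dℓ + ℓ - s by ring]; rfl
      simp only [e1]
      rw [intervalIntegral.integral_comp_sub_left (fun u : ℝ => c₁ * u⁻¹) (dℓ + ℓ)]
      rw [intervalIntegral.integral_const_mul]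
      rw [integral_inv (Set.notMem_uIcc_of_lt (by linarith) (by linarith))]
      rw [show dℓ + ℓ - ℓ = dℓ by ring]
      rw [show dℓ + ℓ - m = D by rw [hD, hm]; ring]
    -- lower bounds on the two pieces
    have hpiece1 : ENNReal.ofReal (c₁ * Real.log (D / d₀)) ≤ ∫⁻ s in Set.Icc 0 m, ρ (γ s) := by
      have hcont : ContinuousOn (fun s : ℝ => c₁ / (d₀ + s)) (Set.Icc 0 m) := by
        apply ContinuousOn.div continuousOn_const (by fun_prop)
        intro s hs
        have := hs.1
        positivity
      have hintg : IntegrableOn (fun s : ℝ => c₁ / (d₀ + s)) (Set.Icc 0 m) volume :=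
        hcont.integrableOn_Icc
      have hnn : 0 ≤ᵐ[volume.restrict (Set.Icc 0 m)] fun s : ℝ => c₁ / (d₀ + s) := by
        refine (ae_restrict_iff' measurableSet_Icc).2 (Filter.Eventually.of_forall fun s hs => ?_)
        have h0 : (0:ℝ) ≤ c₁ / (d₀ + s) := by
          have := hs.1; positivity
        simpa using h0
      have e2 : ENNReal.ofReal (∫ s in Set.Icc 0 m, c₁ / (d₀ + s)) =
          ∫⁻ s in Set.Icc 0 m, ENNReal.ofReal (c₁ / (d₀ + s)) :=
        ofReal_integral_eq_lintegral_ofReal hintg hnn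
      have e3 : ∫ s in Set.Icc 0 m, c₁ / (d₀ + s) = c₁ * Real.log (D / d₀) := by
        rw [integral_Icc_eq_integral_Ioc, ← intervalIntegral.integral_of_le hm0, hint1]
      rw [← e3, e2]
      apply setLIntegral_mono' measurableSet_Icc
      intro s hs
      have hs' : s ∈ Set.Icc 0 ℓ := ⟨hs.1, le_trans hs.2 hmℓ⟩
      exact hpt s hs' (d₀ + s) (hup₁ s hs')
    have hpiece2 : ENNReal.ofReal (c₁ * Real.log (D / dℓ)) ≤ ∫⁻ s in Set.Ioc m ℓ, ρ (γ s) := by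
      have hcont : ContinuousOn (fun s : ℝ => c₁ / (dℓ + (ℓ - s))) (Set.Icc m ℓ) := by
        apply ContinuousOn.div continuousOn_const (by fun_prop)
        intro s hs
        have := hs.2
        have : 0 ≤ ℓ - s := by linarith
        positivity
      have hintg : IntegrableOn (fun s : ℝ => c₁ / (dℓ + (ℓ - s))) (Set.Ioc m ℓ) volume :=
        hcont.integrableOn_Icc.mono_set Set.Ioc_subset_Icc_self
      have hnn : 0 ≤ᵐ[volume.restrict (Set.Ioc m ℓ)] fun s : ℝ => c₁ / (dℓ + (ℓ - s)) := by
        refine (ae_restrict_iff' measurableSet_Ioc).2 (Filter.Eventually.of_forall fun s hs => ?_)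
        have h5 : s ≤ ℓ := hs.2
        have h0 : (0:ℝ) ≤ c₁ / (dℓ + (ℓ - s)) := by
          have h4 : 0 ≤ ℓ - s := by linarith
          positivity
        simpa using h0
      have e2 : ENNReal.ofReal (∫ s in Set.Ioc m ℓ, c₁ / (dℓ + (ℓ - s))) =
          ∫⁻ s in Set.Ioc m ℓ, ENNReal.ofReal (c₁ / (dℓ + (ℓ - s))) :=
        ofReal_integral_eq_lintegral_ofReal hintg hnn
      have e3 : ∫ s in Set.Ioc m ℓ, c₁ / (dℓ + (ℓ - s)) = c₁ * Real.log (D / dℓ) := by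
        rw [← intervalIntegral.integral_of_le hmℓ, hint2]
      rw [← e3, e2]
      apply setLIntegral_mono' measurableSet_Ioc
      intro s hs
      have hs' : s ∈ Set.Icc 0 ℓ := ⟨le_trans hm0 hs.1.le, hs.2⟩
      exact hpt s hs' (dℓ + (ℓ - s)) (hup₂ s hs')
    -- the key polynomial inequality
    have hlen : d₀ + dℓ - 2 * b ≤ L ^ 2 * (ℓ + b) := by
      have hu1 : d₀ ≤ L * (-t₀) + b := by
        have := hup t₀ 0
        rw [show |t₀ - 0| = -t₀ by rw [sub_zero, abs_of_nonpos (by linarith)]] at this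
        rw [hd₀def, ← hσt₀, hx₀]
        exact this
      have hu2 : dℓ ≤ L * s₀ + b := by
        have := hup s₀ 0
        rw [show |s₀ - 0| = s₀ by rw [sub_zero, abs_of_nonneg (by linarith)]] at this
        rw [hdℓdef, ← hσs₀, hx₀]
        exact this
      have hl1 : L⁻¹ * (s₀ - t₀) - b ≤ ℓ := by
        have h1 := hlow s₀ t₀
        rw [show |s₀ - t₀| = s₀ - t₀ by rw [abs_of_nonneg (by linarith)]] at h1
        have h2 : dist (σ s₀) (σ t₀) = dist (γ ℓ) (γ 0) := by rw [hσs₀, hσt₀]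
        have h3 : dist (γ ℓ) (γ 0) ≤ |ℓ - 0| := hdist ℓ hmemℓ 0 hmem0
        rw [show |ℓ - 0| = ℓ by rw [sub_zero, abs_of_nonneg hℓ]] at h3
        linarith
      have hl2 : s₀ - t₀ ≤ L * (ℓ + b) := by
        have h4 : L * (L⁻¹ * (s₀ - t₀) - b) ≤ L * ℓ := mul_le_mul_of_nonneg_left hl1 hL0.le
        have h5 : L * (L⁻¹ * (s₀ - t₀)) = s₀ - t₀ := by field_simp
        rw [mul_sub, h5] at h4
        linarith
      have e : L * (s₀ - t₀) ≤ L ^ 2 * (ℓ + b) := by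
        calc L * (s₀ - t₀) ≤ L * (L * (ℓ + b)) := mul_le_mul_of_nonneg_left hl2 hL0.le
          _ = L ^ 2 * (ℓ + b) := by ring
      linarith [e]
    have h2D : (L ^ 2 + 3/4) * (d₀ + dℓ) ≤ 2 * L ^ 2 * D := by
      have hbS : b * (L ^ 2 + 2) ≤ (d₀ + dℓ) / 4 := by nlinarith [hd₀R, hdℓR, hR₁]
      rw [hD]; linarith [hlen, hbS]
    have hSnn : 0 ≤ (L ^ 2 + 3/4) * (d₀ + dℓ) := by positivity
    have hsq : ((L ^ 2 + 3/4) * (d₀ + dℓ)) ^ 2 ≤ (2 * L ^ 2 * D) ^ 2 :=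
      pow_le_pow_left₀ hSnn h2D 2
    have hPle : 4 * (d₀ * dℓ) ≤ (d₀ + dℓ) ^ 2 := by nlinarith [sq_nonneg (d₀ - dℓ)]
    have hPpos : 0 < d₀ * dℓ := mul_pos hd₀pos hdℓpos
    have hykey : (4 * L ^ 2 + 4) * (d₀ * dℓ) ≤ (4 * L ^ 2 + 3) * D ^ 2 := by
      have hcoeff : (4 * L ^ 2 + 4) * (4 * L ^ 4) ≤ (4 * L ^ 2 + 3) * ((L ^ 2 + 3/4) ^ 2 * 4) := by
        nlinarith [sq_nonneg L, sq_nonneg (L ^ 2), pow_pos hL0 4]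
      have key : 4 * L ^ 4 * ((4 * L ^ 2 + 4) * (d₀ * dℓ)) ≤
          4 * L ^ 4 * ((4 * L ^ 2 + 3) * D ^ 2) := by
        calc 4 * L ^ 4 * ((4 * L ^ 2 + 4) * (d₀ * dℓ))
            = ((4 * L ^ 2 + 4) * (4 * L ^ 4)) * (d₀ * dℓ) := by ring
          _ ≤ ((4 * L ^ 2 + 3) * ((L ^ 2 + 3/4) ^ 2 * 4)) * (d₀ * dℓ) :=
              mul_le_mul_of_nonneg_right hcoeff hPpos.le
          _ = (4 * L ^ 2 + 3) * ((L ^ 2 + 3/4) ^ 2 * (4 * (d₀ * dℓ))) := by ring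
          _ ≤ (4 * L ^ 2 + 3) * ((L ^ 2 + 3/4) ^ 2 * (d₀ + dℓ) ^ 2) := by
              apply mul_le_mul_of_nonneg_left _ (by positivity)
              apply mul_le_mul_of_nonneg_left hPle (by positivity)
          _ = (4 * L ^ 2 + 3) * ((L ^ 2 + 3/4) * (d₀ + dℓ)) ^ 2 := by ring
          _ ≤ (4 * L ^ 2 + 3) * (2 * L ^ 2 * D) ^ 2 :=
              mul_le_mul_of_nonneg_left hsq (by positivity)
          _ = 4 * L ^ 4 * ((4 * L ^ 2 + 3) * D ^ 2) := by ring
      exact le_of_mul_le_mul_left key (by positivity)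
    -- the real inequality
    have hD2pos : 0 < D ^ 2 := by positivity
    have hreal : 1 ≤ c₁ * Real.log (D / d₀) + c₁ * Real.log (D / dℓ) := by
      have hlogsum : Real.log (D / d₀) + Real.log (D / dℓ) = Real.log (D ^ 2 / (d₀ * dℓ)) := by
        rw [← Real.log_mul (by positivity) (by positivity)]
        congr 1
        field_simp
      have hloglb : 1 - (d₀ * dℓ) / D ^ 2 ≤ Real.log (D ^ 2 / (d₀ * dℓ)) := by
        have h1 := Real.log_le_sub_one_of_pos (show 0 < (d₀ * dℓ) / D ^ 2 by positivity)
        have h2 : Real.log (D ^ 2 / (d₀ * dℓ)) = - Real.log ((d₀ * dℓ) / D ^ 2) := by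
          rw [← Real.log_inv, inv_div]
        rw [h2]
        linarith
      have h6 : (d₀ * dℓ) / D ^ 2 ≤ (4 * L ^ 2 + 3) / (4 * L ^ 2 + 4) := by
        rw [div_le_div_iff₀ hD2pos (by positivity)]
        nlinarith [hykey]
      have h7 : 1 ≤ c₁ * (1 - (d₀ * dℓ) / D ^ 2) := by
        rw [hc₁]
        have h8 : 1 / (4 * L ^ 2 + 4) ≤ 1 - (d₀ * dℓ) / D ^ 2 := by
          have : 1 - (4 * L ^ 2 + 3) / (4 * L ^ 2 + 4) = 1 / (4 * L ^ 2 + 4) := by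
            field_simp
            ring
          linarith
        have h9 : (4 * (L ^ 2 + 1)) * (1 / (4 * L ^ 2 + 4)) = 1 := by
          field_simp
        calc (1:ℝ) = (4 * (L ^ 2 + 1)) * (1 / (4 * L ^ 2 + 4)) := h9.symm
          _ ≤ (4 * (L ^ 2 + 1)) * (1 - (d₀ * dℓ) / D ^ 2) :=
              mul_le_mul_of_nonneg_left h8 (by positivity)
      calc (1:ℝ) ≤ c₁ * (1 - (d₀ * dℓ) / D ^ 2) := h7
        _ ≤ c₁ * Real.log (D ^ 2 / (d₀ * dℓ)) := mul_le_mul_of_nonneg_left hloglb hc₁nn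
        _ = c₁ * Real.log (D / d₀) + c₁ * Real.log (D / dℓ) := by rw [← hlogsum]; ring
    -- assemble
    have hA : 0 ≤ c₁ * Real.log (D / d₀) := by
      apply mul_nonneg hc₁nn
      apply Real.log_nonneg
      rw [le_div_iff₀ hd₀pos]; linarith
    have hB : 0 ≤ c₁ * Real.log (D / dℓ) := by
      apply mul_nonneg hc₁nn
      apply Real.log_nonneg
      rw [le_div_iff₀ hdℓpos]; linarith
    have hsplit : ∫⁻ s in Set.Icc 0 ℓ, ρ (γ s) =
        (∫⁻ s in Set.Icc 0 m, ρ (γ s)) + ∫⁻ s in Set.Ioc m ℓ, ρ (γ s) := by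
      rw [← Set.Icc_union_Ioc_eq_Icc hm0 hmℓ]
      exact lintegral_union measurableSet_Ioc
        (Set.disjoint_left.mpr fun x hx hx' => absurd hx.2 (not_le.mpr hx'.1))
    rw [hsplit]
    calc (1:ℝ≥0∞) = ENNReal.ofReal 1 := ENNReal.ofReal_one.symm
      _ ≤ ENNReal.ofReal (c₁ * Real.log (D / d₀) + c₁ * Real.log (D / dℓ)) :=
          ENNReal.ofReal_le_ofReal hreal
      _ = ENNReal.ofReal (c₁ * Real.log (D / d₀)) + ENNReal.ofReal (c₁ * Real.log (D / dℓ)) :=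
          ENNReal.ofReal_add hA hB
      _ ≤ (∫⁻ s in Set.Icc 0 m, ρ (γ s)) + ∫⁻ s in Set.Ioc m ℓ, ρ (γ s) :=
          add_le_add hpiece1 hpiece2
end

section
/- Let f: X → Y be a homeomorphism between metric spaces with Y proper (closed balls compact). If (Eₙ)ₙ is an increasing sequence of nonempty compact subsets of X whose union E = ⋃ₙ Eₙ is unbounded, then diam f(Eₙ) → ∞ as n → ∞. -/
open Filter

theorem stmt_7 {X Y : Type*} [MetricSpace X] [MetricSpace Y] [ProperSpace Y]
    (f : X ≃ₜ Y) (E : ℕ → Set X)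
    (hmono : Monotone E) (hne : ∀ n, (E n).Nonempty) (hcpt : ∀ n, IsCompact (E n))
    (hunb : ¬ Bornology.IsBounded (⋃ n, E n)) :
    Tendsto (fun n => Metric.diam (f '' E n)) atTop atTop := by
  apply tendsto_atTop_atTop_of_monotone
  · intro m n h
    exact Metric.diam_mono (Set.image_mono (f := f) (hmono h))
      ((hcpt n).image f.continuous).isBounded
  · intro b
    by_contra hb
    push_neg at hb
    obtain ⟨x0, hx0⟩ := hne 0
    have hsub : ∀ n, f '' E n ⊆ Metric.closedBall (f x0) b := by
      intro n y hy
      have hx0n : f x0 ∈ f '' E n := ⟨x0, hmono (Nat.zero_le n) hx0, rfl⟩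
      have hd := Metric.dist_le_diam_of_mem ((hcpt n).image f.continuous).isBounded hy hx0n
      exact Metric.mem_closedBall.2 (hd.trans (hb n).le)
    have hbd : Bornology.IsBounded (⋃ n, f '' E n) :=
      Metric.isBounded_closedBall.subset (Set.iUnion_subset hsub)
    have hK : IsCompact (closure (⋃ n, f '' E n)) := hbd.isCompact_closure
    have hK' : IsCompact (f.symm '' closure (⋃ n, f '' E n)) := hK.image f.symm.continuous
    apply hunb
    apply hK'.isBounded.subset
    intro x hx
    obtain ⟨n, hn⟩ := Set.mem_iUnion.1 hx
    exact ⟨f x, subset_closure (Set.mem_iUnion.2 ⟨n, ⟨x, hn, rfl⟩⟩), f.symm_apply_apply x⟩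
end

section
/- The map f: ℝ³ → ℝ³ defined by f(x,y,θ) = (−x cos θ − y sin θ, θ, 4x sin θ − 4y cos θ − 2xθ cos θ − 2yθ sin θ) satisfies f*β = 4α, where α = sin θ dx − cos θ dy and β = dt − 2y dx + 2x dy (with target coordinates (x,y,t)); moreover f is a bijection. Hence (ℝ³, ker α) and (ℝ³, ker β) are contactomorphic. -/
theorem stmt_13
    (f : ℝ × ℝ × ℝ → ℝ × ℝ × ℝ)
    (hf : ∀ p : ℝ × ℝ × ℝ,
      f p = (-p.1 * Real.cos p.2.2 - p.2.1 * Real.sin p.2.2, p.2.2,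
             4 * p.1 * Real.sin p.2.2 - 4 * p.2.1 * Real.cos p.2.2
               - 2 * p.1 * p.2.2 * Real.cos p.2.2 - 2 * p.2.1 * p.2.2 * Real.sin p.2.2))
    (α β : ℝ × ℝ × ℝ → (ℝ × ℝ × ℝ) →L[ℝ] ℝ)
    (hα : ∀ (p v : ℝ × ℝ × ℝ), α p v = Real.sin p.2.2 * v.1 - Real.cos p.2.2 * v.2.1)
    (hβ : ∀ (p v : ℝ × ℝ × ℝ), β p v = v.2.2 - 2 * p.2.1 * v.1 + 2 * p.1 * v.2.1) :
    Function.Bijective f ∧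
      ∀ (p v : ℝ × ℝ × ℝ), β (f p) (fderiv ℝ f p v) = 4 * α p v := by
  constructor
  · rw [Function.bijective_iff_has_inverse]
    refine ⟨fun q : ℝ × ℝ × ℝ =>
      (-q.1 * Real.cos q.2.1 + (q.2.2 - 2 * q.2.1 * q.1) / 4 * Real.sin q.2.1,
       -q.1 * Real.sin q.2.1 - (q.2.2 - 2 * q.2.1 * q.1) / 4 * Real.cos q.2.1,
       q.2.1), ?_, ?_⟩
    · intro p
      obtain ⟨x, y, t⟩ := p
      rw [hf _]
      have h := Real.sin_sq_add_cos_sq t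
      simp only [Prod.mk.injEq]
      exact ⟨by linear_combination x * h, by linear_combination y * h, trivial⟩
    · intro q
      obtain ⟨u, t, w⟩ := q
      rw [hf _]
      have h := Real.sin_sq_add_cos_sq t
      simp only [Prod.mk.injEq]
      exact ⟨by linear_combination u * h, trivial, by linear_combination w * h⟩
  · intro p v
    have hx : HasFDerivAt (fun p : ℝ × ℝ × ℝ => p.1)
        (ContinuousLinearMap.fst ℝ ℝ (ℝ × ℝ)) p := hasFDerivAt_fst
    have hy := (hasFDerivAt_snd (𝕜 := ℝ) (p := p) (E := ℝ) (F := ℝ × ℝ)).fst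
    have hθ := (hasFDerivAt_snd (𝕜 := ℝ) (p := p) (E := ℝ) (F := ℝ × ℝ)).snd
    have hcos := (Real.hasDerivAt_cos p.2.2).comp_hasFDerivAt p hθ
    have hsin := (Real.hasDerivAt_sin p.2.2).comp_hasFDerivAt p hθ
    have h1 := (hx.neg.mul hcos).sub (hy.mul hsin)
    have h3 := ((((hx.const_mul (4:ℝ)).mul hsin).sub ((hy.const_mul (4:ℝ)).mul hcos)).sub
        (((hx.const_mul (2:ℝ)).mul hθ).mul hcos)).sub (((hy.const_mul (2:ℝ)).mul hθ).mul hsin)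
    have hF := HasFDerivAt.prodMk h1 (HasFDerivAt.prodMk hθ h3)
    have hF2 : HasFDerivAt f _ p :=
      hF.congr_of_eventuallyEq (Filter.Eventually.of_forall fun q => by
        rw [hf q]; rfl)
    rw [hF2.fderiv, hβ, hf p, hα]
    simp only [ContinuousLinearMap.prod_apply, ContinuousLinearMap.add_apply,
      ContinuousLinearMap.sub_apply, ContinuousLinearMap.smul_apply,
      ContinuousLinearMap.neg_apply, ContinuousLinearMap.comp_apply,
      ContinuousLinearMap.coe_fst', ContinuousLinearMap.coe_snd',
      ContinuousLinearMap.coe_smul', Pi.smul_apply, smul_eq_mul, Function.comp_apply, Pi.mul_apply, Pi.neg_apply]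
    ring
end

section
/- Fix λ ∈ (1,2) and let f_λ: ℂ → ℂ be the radial stretch f_λ(z) = z|z|^{(λ−1)/(2−λ)} (with f_λ(0)=0). Let X = {(x,y) : −1 ≤ y ≤ 1} and Y = f_λ(X). Then there exists a > 0 such that Y ⊆ [−a,a]² ∪ {(x,y) : −a|x|^{λ−1} ≤ y ≤ a|x|^{λ−1}}; consequently there exist R₀ > 0 and C₀ > 0 such that the Lebesgue measure of Y ∩ B(0,r) is at most C₀ r^λ for all r ≥ R₀. -/
open MeasureTheory

set_option maxHeartbeats 1000000 in
theorem stmt_18 (lam : ℝ) (hlam : 1 < lam) (hlam2 : lam < 2)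
    (f : ℂ → ℂ)
    (hf : ∀ z : ℂ, f z = ((‖z‖ ^ ((lam - 1) / (2 - lam)) : ℝ) : ℂ) * z)
    (X Y : Set ℂ)
    (hX : X = {z : ℂ | -1 ≤ z.im ∧ z.im ≤ 1})
    (hY : Y = f '' X) :
    (∃ a > (0 : ℝ),
      Y ⊆ {z : ℂ | |z.re| ≤ a ∧ |z.im| ≤ a} ∪
          {z : ℂ | -a * |z.re| ^ (lam - 1) ≤ z.im ∧ z.im ≤ a * |z.re| ^ (lam - 1)}) ∧
    ∃ R₀ > (0 : ℝ), ∃ C₀ > (0 : ℝ), ∀ r : ℝ, R₀ ≤ r →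
      volume (Y ∩ Metric.closedBall 0 r) ≤ ENNReal.ofReal (C₀ * r ^ lam) := by
  have h2l : (0:ℝ) < 2 - lam := by linarith
  have hl1 : (0:ℝ) < lam - 1 := by linarith
  set α : ℝ := (lam - 1) / (2 - lam) with hαdef
  have hα : 0 < α := div_pos hl1 h2l
  set a : ℝ := (2:ℝ) ^ ((1:ℝ)/(2-lam)) with hadef
  have ha0 : 0 < a := Real.rpow_pos_of_pos (by norm_num) _
  have ha2 : (2:ℝ) ≤ a := by
    have h1 : (2:ℝ) = (2:ℝ) ^ (1:ℝ) := by simp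
    rw [h1]
    refine (Real.rpow_le_rpow_left_iff (by norm_num)).mpr ?_
    rw [le_div_iff₀ h2l]; linarith
  have hkey : ∀ z ∈ Y,
      (|z.re| ≤ a ∧ |z.im| ≤ a) ∨ (|z.im| ≤ a * |z.re| ^ (lam - 1)) := by
    intro z hz
    rw [hY] at hz
    obtain ⟨w, hw, rfl⟩ := hz
    rw [hX] at hw
    have hwim : |w.im| ≤ 1 := abs_le.mpr hw
    set s : ℝ := ‖w‖ with hsdef
    have hs0 : 0 ≤ s := norm_nonneg w
    set t : ℝ := s ^ α with htdef
    have ht0 : 0 ≤ t := Real.rpow_nonneg hs0 _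
    have hre : (f w).re = t * w.re := by rw [hf]; simp; exact Or.inl rfl
    have him : (f w).im = t * w.im := by rw [hf]; simp; exact Or.inl rfl
    have hsq : s ^ 2 = w.re ^ 2 + w.im ^ 2 := by
      rw [hsdef, Complex.sq_norm, Complex.normSq_apply]; ring
    have habs_im : |(f w).im| ≤ t := by
      rw [him, abs_mul, abs_of_nonneg ht0]
      nlinarith [abs_nonneg w.im]
    by_cases hcase : |w.re| ≤ 1
    · left
      have hs2 : s ≤ 2 := by nlinarith [sq_abs w.re, sq_abs w.im, abs_nonneg w.re, abs_nonneg w.im]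
      have hta : t ≤ a := by
        calc t ≤ (2:ℝ) ^ α := Real.rpow_le_rpow hs0 hs2 hα.le
          _ ≤ a := by
              refine (Real.rpow_le_rpow_left_iff (by norm_num)).mpr ?_
              rw [hαdef, div_le_div_iff₀ h2l h2l]
              nlinarith
      refine ⟨?_, habs_im.trans hta⟩
      rw [hre, abs_mul, abs_of_nonneg ht0]
      calc t * |w.re| ≤ t * 1 := by nlinarith
        _ ≤ a := by linarith
    · right
      push_neg at hcase
      have hwre0 : (0:ℝ) < |w.re| := by linarith
      have him1 : w.im ^ 2 ≤ 1 := by nlinarith [sq_abs w.im, abs_nonneg w.im]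
      have hre1 : 1 ≤ w.re ^ 2 := by nlinarith [sq_abs w.re]
      have hs204 : s ^ 2 ≤ (2 * |w.re|) ^ 2 := by
        nlinarith [sq_abs w.re, hsq, him1, hre1]
      have hs2 : s ≤ 2 * |w.re| := by nlinarith [abs_nonneg w.re]
      have hsre : |w.re| ≤ s := by
        rw [hsdef]; exact Complex.abs_re_le_norm w
      have hspos : (0:ℝ) < s := lt_of_lt_of_le hwre0 hsre
      -- s^(lam-1) ≤ a * |w.re|^(lam-1)
      have hstep : s ^ (lam - 1) ≤ a * |w.re| ^ (lam - 1) := by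
        calc s ^ (lam - 1) ≤ (2 * |w.re|) ^ (lam - 1) :=
              Real.rpow_le_rpow hs0 hs2 hl1.le
          _ = 2 ^ (lam - 1) * |w.re| ^ (lam - 1) :=
              Real.mul_rpow (by norm_num) (abs_nonneg _)
          _ ≤ a * |w.re| ^ (lam - 1) := by
              have h21 : (2:ℝ) ^ (lam - 1) ≤ 2 ^ (1:ℝ) :=
                Real.rpow_le_rpow_of_exponent_le (by norm_num) (by linarith)
              have h22 : (2:ℝ) ^ (1:ℝ) = 2 := by simp
              have := Real.rpow_nonneg (abs_nonneg w.re) (lam - 1)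
              nlinarith
      have hαsplit : α = α * (lam - 1) + (lam - 1) := by
        rw [hαdef]; field_simp; ring
      have hre_abs : |(f w).re| = t * |w.re| := by
        rw [hre, abs_mul, abs_of_nonneg ht0]
      calc |(f w).im| ≤ t := habs_im
        _ = s ^ (α * (lam - 1)) * s ^ (lam - 1) := by
            rw [htdef, ← Real.rpow_add hspos, ← hαsplit]
        _ ≤ s ^ (α * (lam - 1)) * (a * |w.re| ^ (lam - 1)) := by
            have := Real.rpow_nonneg hs0 (α * (lam - 1))
            nlinarith
        _ = a * ((s ^ α * |w.re|) ^ (lam - 1)) := by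
            rw [Real.mul_rpow ht0 (abs_nonneg _), ← Real.rpow_mul hs0]
            ring
        _ = a * |(f w).re| ^ (lam - 1) := by rw [hre_abs, htdef]
  refine ⟨⟨a, ha0, ?_⟩, a, ha0, 4 * a, by linarith, ?_⟩
  · intro z hz
    rcases hkey z hz with h | h
    · exact Set.mem_union_left _ h
    · refine Set.mem_union_right _ ⟨?_, (abs_le.mp h).2⟩
      have := (abs_le.mp h).1
      linarith
  · intro r hr
    have hr2 : (2:ℝ) ≤ r := le_trans ha2 hr
    have hr0 : (0:ℝ) < r := by linarith
    set M : ℝ := a * r ^ (lam - 1) with hMdef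
    have hrpow1 : (1:ℝ) ≤ r ^ (lam - 1) :=
      Real.one_le_rpow (by linarith) hl1.le
    have hM0 : 0 < M := by positivity
    have haM : a ≤ M := by
      rw [hMdef]; nlinarith
    set S : Set ℂ :=
      Complex.measurableEquivRealProd ⁻¹' (Set.Icc (-r) r ×ˢ Set.Icc (-M) M) with hSdef
    have hsub : Y ∩ Metric.closedBall 0 r ⊆ S := by
      rintro z ⟨hzY, hzB⟩
      have hzr : ‖z‖ ≤ r := by
        rw [Metric.mem_closedBall, dist_zero_right] at hzB
        exact hzB
      have hre_r : |z.re| ≤ r := le_trans (Complex.abs_re_le_norm z) hzr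
      have him_M : |z.im| ≤ M := by
        rcases hkey z hzY with ⟨h1, h2⟩ | h
        · exact le_trans h2 haM
        · refine le_trans h ?_
          rw [hMdef]
          have : |z.re| ^ (lam - 1) ≤ r ^ (lam - 1) :=
            Real.rpow_le_rpow (abs_nonneg _) hre_r hl1.le
          nlinarith
      rw [hSdef, Set.mem_preimage, Complex.measurableEquivRealProd_apply]
      exact ⟨abs_le.mp hre_r, abs_le.mp him_M⟩
    calc volume (Y ∩ Metric.closedBall 0 r) ≤ volume S := measure_mono hsub
      _ = volume (Set.Icc (-r) r ×ˢ Set.Icc (-M) M) := by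
          rw [hSdef]
          exact Complex.volume_preserving_equiv_real_prod.measure_preimage
            ((measurableSet_Icc.prod measurableSet_Icc).nullMeasurableSet)
      _ = ENNReal.ofReal (r - (-r)) * ENNReal.ofReal (M - (-M)) := by
          rw [MeasureTheory.Measure.volume_eq_prod, MeasureTheory.Measure.prod_prod,
            Real.volume_Icc, Real.volume_Icc]
      _ ≤ ENNReal.ofReal (4 * a * r ^ lam) := by
          rw [← ENNReal.ofReal_mul (by linarith)]
          apply ENNReal.ofReal_le_ofReal
          have hrl : r ^ lam = r * r ^ (lam - 1) := by
            nth_rewrite 2 [show r = r ^ (1:ℝ) by simp]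
            rw [← Real.rpow_add hr0]; ring_nf
          have heq : (r - -r) * (M - -M) = 4 * a * r ^ lam := by
            rw [hrl, hMdef]; ring
          linarith
end
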